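/- arXiv:2603.19740 — 2 statements merged into one kernel-verified Lean document; each statement's English description precedes it below -/
import Mathlib

section
/- Let Ω ⊂ ℝ^N (N ≥ 3) be an open convex set, let u ∈ C²(Ω), and suppose there exists a strictly increasing function U ∈ C²(I), defined on an open interval I containing u(Ω), such that the composition x ↦ U(u(x)) is convex on Ω. Then for every x ∈ Ω, writing H := D²u(x) for the Hessian matrix of u at x, g := ∇u(x) for the gradient, and s := tr(H), the following inequality holds: (1/3)‖g‖²·[2·tr((s·I − H)·H²) − 2·S₂(H)·s] ≤ 2⟨(s·I − H)·H g, H g⟩ − 2·S₂(H)·⟨H g, g⟩. -/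
open Matrix

/-- `S₂(M) := (1/2)[(tr M)² − tr(M²)]`. -/
noncomputable def S2 {n : ℕ} (M : Matrix (Fin n) (Fin n) ℝ) : ℝ :=
  (1 / 2) * (M.trace ^ 2 - (M * M).trace)

/-- The Hessian matrix `D²u(x)` of `u` at `x`. -/
noncomputable def hessianMatrix {n : ℕ} (u : EuclideanSpace ℝ (Fin n) → ℝ)
    (x : EuclideanSpace ℝ (Fin n)) : Matrix (Fin n) (Fin n) ℝ :=
  fun i j => iteratedFDeriv ℝ 2 u x ![EuclideanSpace.single i 1, EuclideanSpace.single j 1]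

/-- The gradient `∇u(x)` of `u` at `x`, as a vector in `ℝ^n`. -/
noncomputable def gradVec {n : ℕ} (u : EuclideanSpace ℝ (Fin n) → ℝ)
    (x : EuclideanSpace ℝ (Fin n)) : Fin n → ℝ :=
  fun i => gradient u x i


lemma sum_sq_le (s : Finset ι) (μ : ι → ℝ) (h : ∀ i ∈ s, 0 ≤ μ i) :
    ∑ i ∈ s, μ i ^ 2 ≤ (∑ i ∈ s, μ i) ^ 2 := by
  classical
  induction s using Finset.induction_on with
  | empty => simp
  | insert _ _ hnotmem ih =>
    rename_i a s
    rw [Finset.sum_insert hnotmem, Finset.sum_insert hnotmem]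
    have h1 : 0 ≤ μ a := h a (Finset.mem_insert_self a s)
    have h2 : ∀ i ∈ s, 0 ≤ μ i := fun i hi => h i (Finset.mem_insert_of_mem hi)
    have h3 : 0 ≤ ∑ i ∈ s, μ i := Finset.sum_nonneg h2
    nlinarith [ih h2]

lemma cube_sum_ineq (s : Finset ι) (μ : ι → ℝ) (h : ∀ i ∈ s, 0 ≤ μ i) :
    0 ≤ (∑ i ∈ s, μ i) ^ 3 - 3 * (∑ i ∈ s, μ i) * (∑ i ∈ s, μ i ^ 2)
      + 2 * ∑ i ∈ s, μ i ^ 3 := by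
  classical
  induction s using Finset.induction_on with
  | empty => simp
  | insert _ _ hnotmem ih =>
    rename_i a s
    rw [Finset.sum_insert hnotmem, Finset.sum_insert hnotmem, Finset.sum_insert hnotmem]
    have h1 : 0 ≤ μ a := h a (Finset.mem_insert_self a s)
    have h2 : ∀ i ∈ s, 0 ≤ μ i := fun i hi => h i (Finset.mem_insert_of_mem hi)
    have h3 : 0 ≤ ∑ i ∈ s, μ i := Finset.sum_nonneg h2
    have h4 := sum_sq_le s μ h2
    nlinarith [ih h2]

lemma E3_nonneg {n : ℕ} {M : Matrix (Fin n) (Fin n) ℝ} (hM : M.PosSemidef) :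
    0 ≤ M.trace ^ 3 - 3 * M.trace * (M * M).trace + 2 * (M * M * M).trace := by
  classical
  have hH : M.IsHermitian := hM.1
  set V : Matrix (Fin n) (Fin n) ℝ := (hH.eigenvectorUnitary : Matrix (Fin n) (Fin n) ℝ) with hVdef
  set μ : Fin n → ℝ := hH.eigenvalues
  have hμ : ∀ i, 0 ≤ μ i := hM.eigenvalues_nonneg
  set D : Matrix (Fin n) (Fin n) ℝ := diagonal μ with hDdef
  have hspec : M = V * D * star V := by
    have h := hH.spectral_theorem
    have he : (RCLike.ofReal ∘ μ : Fin n → ℝ) = μ := funext fun i => rfl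
    rwa [he] at h
  have hV : star V * V = 1 := Matrix.mem_unitaryGroup_iff'.mp hH.eigenvectorUnitary.2
  have hV' : ∀ X : Matrix (Fin n) (Fin n) ℝ, star V * (V * X) = X := by
    intro X; rw [← Matrix.mul_assoc, hV, Matrix.one_mul]
  have hconj : ∀ A B : Matrix (Fin n) (Fin n) ℝ,
      (V * A * star V) * (V * B * star V) = V * (A * B) * star V := by
    intro A B
    simp only [Matrix.mul_assoc, hV']
  have htr : ∀ A : Matrix (Fin n) (Fin n) ℝ, (V * A * star V).trace = A.trace := by
    intro A
    rw [Matrix.trace_mul_comm, ← Matrix.mul_assoc, hV, Matrix.one_mul]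
  have h1 : M.trace = ∑ i, μ i := by
    rw [hspec, htr, hDdef, Matrix.trace_diagonal]
  have h2 : (M * M).trace = ∑ i, μ i ^ 2 := by
    rw [hspec, hconj, htr, hDdef, Matrix.diagonal_mul_diagonal, Matrix.trace_diagonal]
    exact Finset.sum_congr rfl fun i _ => (sq (μ i)).symm
  have h3 : (M * M * M).trace = ∑ i, μ i ^ 3 := by
    rw [hspec, hconj, hconj, htr, hDdef, Matrix.diagonal_mul_diagonal,
      Matrix.diagonal_mul_diagonal, Matrix.trace_diagonal]
    exact Finset.sum_congr rfl fun i _ => by ring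
  rw [h1, h2, h3]
  exact cube_sum_ineq Finset.univ μ (fun i _ => hμ i)

lemma trE {n : ℕ} (g : Fin n → ℝ) (A : Matrix (Fin n) (Fin n) ℝ) :
    (vecMulVec g g * A).trace = g ⬝ᵥ (A *ᵥ g) := by
  simp only [Matrix.trace, Matrix.diag, Matrix.mul_apply, Matrix.vecMulVec_apply,
    dotProduct, Matrix.mulVec, Finset.mul_sum]
  rw [Finset.sum_comm]
  exact Finset.sum_congr rfl fun i _ => Finset.sum_congr rfl fun j _ => by ring

lemma EAE {n : ℕ} (g : Fin n → ℝ) (A : Matrix (Fin n) (Fin n) ℝ) :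
    vecMulVec g g * A * vecMulVec g g = (g ⬝ᵥ (A *ᵥ g)) • vecMulVec g g := by
  ext i j
  simp only [Matrix.mul_apply, Matrix.vecMulVec_apply, Matrix.smul_apply, dotProduct,
    Matrix.mulVec, Finset.sum_mul, Finset.mul_sum, smul_eq_mul]
  rw [Finset.sum_comm]
  exact Finset.sum_congr rfl fun k _ => Finset.sum_congr rfl fun l _ => by ring

lemma vecMulVec_mulVec' {n : ℕ} (g v : Fin n → ℝ) :
    vecMulVec g g *ᵥ v = (g ⬝ᵥ v) • g := by
  ext i
  simp only [Matrix.mulVec, Matrix.vecMulVec_apply, dotProduct, Pi.smul_apply, smul_eq_mul,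
    Finset.mul_sum]
  rw [Finset.sum_mul]
  exact Finset.sum_congr rfl fun j _ => by ring

set_option maxHeartbeats 2000000 in
lemma key_alg {n : ℕ} (H : Matrix (Fin n) (Fin n) ℝ) (hH : Hᵀ = H) (g : Fin n → ℝ)
    (hpos : ∀ v : Fin n → ℝ, g ⬝ᵥ v = 0 → 0 ≤ v ⬝ᵥ (H *ᵥ v)) :
    (1 / 3) * (g ⬝ᵥ g) *
        (2 * ((H.trace • (1 : Matrix (Fin n) (Fin n) ℝ) - H) * (H * H)).trace
          - 2 * S2 H * H.trace)
      ≤ 2 * (((H.trace • (1 : Matrix (Fin n) (Fin n) ℝ) - H) *ᵥ (H *ᵥ g)) ⬝ᵥ (H *ᵥ g))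
          - 2 * S2 H * ((H *ᵥ g) ⬝ᵥ g) := by
  classical
  by_cases hg : g = 0
  · simp [hg, Matrix.mulVec_zero, dotProduct_zero, zero_dotProduct]
  -- setup
  set r : ℝ := g ⬝ᵥ g with hrdef
  have hr : 0 < r := by
    have : 0 ≤ r := Finset.sum_nonneg fun i _ => mul_self_nonneg _
    rcases this.lt_or_eq with h | h
    · exact h
    · exfalso; apply hg
      have hz : ∀ i, g i = 0 := by
        intro i
        have h0 : ∑ j, g j * g j = 0 := by
          simpa [hrdef, dotProduct] using h.symm
        have := (Finset.sum_eq_zero_iff_of_nonneg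
          (fun j _ => mul_self_nonneg (g j))).mp h0 i (Finset.mem_univ i)
        nlinarith [this]
      funext i; exact hz i
  set c : ℝ := r⁻¹ with hcdef
  have hcr : c * r = 1 := inv_mul_cancel₀ hr.ne'
  set E : Matrix (Fin n) (Fin n) ℝ := vecMulVec g g with hEdef
  set P : Matrix (Fin n) (Fin n) ℝ := 1 - c • E with hPdef
  -- scalars
  set t1 : ℝ := H.trace with ht1
  set t2 : ℝ := (H * H).trace with ht2
  set t3 : ℝ := (H * (H * H)).trace with ht3
  set a1 : ℝ := g ⬝ᵥ (H *ᵥ g) with ha1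
  set a2 : ℝ := g ⬝ᵥ ((H * H) *ᵥ g) with ha2
  set a3 : ℝ := g ⬝ᵥ ((H * (H * H)) *ᵥ g) with ha3
  have hEE : E * E = r • E := by
    have := EAE g 1
    simpa [hEdef, Matrix.mul_one, Matrix.one_mulVec, hrdef] using this
  have hEHE : E * H * E = a1 • E := EAE g H
  have hEH2E : E * (H * H) * E = a2 • E := EAE g (H * H)
  have hP2 : P * P = P := by
    rw [hPdef]
    simp only [sub_mul, mul_sub, Matrix.one_mul, Matrix.mul_one, smul_mul_assoc,
      mul_smul_comm, hEE, smul_smul]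
    rw [hcr, one_smul, sub_self, smul_zero, sub_zero]
  have hEt : Eᵀ = E := by
    ext i j
    simp [hEdef, Matrix.vecMulVec_apply, Matrix.transpose_apply, mul_comm]
  have hPt : Pᵀ = P := by
    rw [hPdef, Matrix.transpose_sub, Matrix.transpose_one, Matrix.transpose_smul, hEt]
  -- orthogonality of P-projected vectors
  have hPorth : ∀ v : Fin n → ℝ, g ⬝ᵥ (P *ᵥ v) = 0 := by
    intro v
    rw [hPdef, Matrix.sub_mulVec, Matrix.one_mulVec, Matrix.smul_mulVec, hEdef,
      vecMulVec_mulVec', dotProduct_sub, dotProduct_smul, dotProduct_smul, ← hrdef]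
    rw [smul_eq_mul, smul_eq_mul, mul_comm (g ⬝ᵥ v) r, ← mul_assoc, hcr, one_mul, sub_self]
  set M : Matrix (Fin n) (Fin n) ℝ := P * H * P with hMdef
  have hMpsd : M.PosSemidef := by
    rw [Matrix.posSemidef_iff_dotProduct_mulVec]
    constructor
    · show Mᴴ = M
      rw [Matrix.conjTranspose_eq_transpose_of_trivial, hMdef, Matrix.transpose_mul,
        Matrix.transpose_mul, hPt, hH, Matrix.mul_assoc]
    · intro v
      have hstar : star v = v := by
        funext i; simp
      rw [hstar]
      have hexp : M *ᵥ v = P *ᵥ (H *ᵥ (P *ᵥ v)) := by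
        rw [hMdef, ← Matrix.mulVec_mulVec, ← Matrix.mulVec_mulVec]
      have hvP : v ᵥ* P = P *ᵥ v := by
        conv_lhs => rw [← hPt]
        rw [Matrix.vecMul_transpose]
      rw [hexp, Matrix.dotProduct_mulVec, hvP]
      exact hpos (P *ᵥ v) (hPorth v)
  -- N and its powers
  set N : Matrix (Fin n) (Fin n) ℝ := H * P with hNdef
  have hNP : N * P = N := by rw [hNdef, Matrix.mul_assoc, hP2]
  have hMPN : M = P * N := by rw [hMdef, hNdef, Matrix.mul_assoc]
  have hM2 : M * M = P * (N * N) := by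
    rw [hMPN, Matrix.mul_assoc]
    congr 1
    rw [← Matrix.mul_assoc, hNP]
  have hM3 : M * M * M = P * (N * (N * N)) := by
    rw [hM2, hMPN, Matrix.mul_assoc]
    congr 1
    rw [← Matrix.mul_assoc, Matrix.mul_assoc N N P, hNP, Matrix.mul_assoc]
  have trM1 : M.trace = N.trace := by
    rw [hMPN, Matrix.trace_mul_comm, hNP]
  have trM2 : (M * M).trace = (N * N).trace := by
    rw [hM2, Matrix.trace_mul_comm, Matrix.mul_assoc, hNP]
  have trM3 : (M * M * M).trace = (N * (N * N)).trace := by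
    rw [hM3, Matrix.trace_mul_comm, Matrix.mul_assoc N (N*N) P, Matrix.mul_assoc N N P, hNP]
  -- trace helpers
  have trE' : ∀ A : Matrix (Fin n) (Fin n) ℝ, (E * A).trace = g ⬝ᵥ (A *ᵥ g) := by
    intro A; rw [hEdef]; exact trE g A
  have W_HE : (H * E).trace = a1 := by
    rw [Matrix.trace_mul_comm, trE', ← ha1]
  have W_HHE : (H * (H * E)).trace = a2 := by
    rw [Matrix.trace_mul_comm, Matrix.mul_assoc H E H, Matrix.trace_mul_comm,
      Matrix.mul_assoc E H H, trE', ← ha2]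
  have W_HEH : (H * (E * H)).trace = a2 := by
    rw [Matrix.trace_mul_comm, Matrix.mul_assoc E H H, trE', ← ha2]
  have W_HHHE : (H * (H * (H * E))).trace = a3 := by
    rw [Matrix.trace_mul_comm, Matrix.mul_assoc H (H*E) H, Matrix.mul_assoc H E H,
      Matrix.trace_mul_comm, Matrix.mul_assoc H (E*H) H, Matrix.mul_assoc E H H,
      Matrix.trace_mul_comm, Matrix.mul_assoc E (H*H) H, Matrix.mul_assoc H H H,
      trE', ← ha3]
  have W_HHEH : (H * (H * (E * H))).trace = a3 := by
    rw [Matrix.trace_mul_comm, Matrix.mul_assoc H (E*H) H, Matrix.mul_assoc E H H,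
      Matrix.trace_mul_comm, Matrix.mul_assoc E (H*H) H, Matrix.mul_assoc H H H,
      trE', ← ha3]
  have W_HEHH : (H * (E * (H * H))).trace = a3 := by
    rw [Matrix.trace_mul_comm, Matrix.mul_assoc E (H*H) H, Matrix.mul_assoc H H H,
      trE', ← ha3]
  have hinner1 : E * (H * E) = a1 • E := by
    rw [← Matrix.mul_assoc]; exact hEHE
  have hinner2 : E * (H * (H * E)) = a2 • E := by
    rw [← Matrix.mul_assoc E H (H*E), ← Matrix.mul_assoc (E*H) H E,
      Matrix.mul_assoc E H H]
    exact hEH2E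
  have hinner1' : ∀ Y : Matrix (Fin n) (Fin n) ℝ, E * (H * (E * Y)) = a1 • (E * Y) := by
    intro Y
    rw [← Matrix.mul_assoc E H (E*Y), ← Matrix.mul_assoc (E*H) E Y, hEHE, smul_mul_assoc]
  have W_HEHE : (H * (E * (H * E))).trace = a1 * a1 := by
    rw [hinner1, mul_smul_comm, Matrix.trace_smul, W_HE, smul_eq_mul]
  have W_HHEHE : (H * (H * (E * (H * E)))).trace = a1 * a2 := by
    rw [hinner1, mul_smul_comm, mul_smul_comm, Matrix.trace_smul, W_HHE, smul_eq_mul]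
  have W_HEHHE : (H * (E * (H * (H * E)))).trace = a2 * a1 := by
    rw [hinner2, mul_smul_comm, Matrix.trace_smul, W_HE, smul_eq_mul]
  have W_HEHEH : (H * (E * (H * (E * H)))).trace = a1 * a2 := by
    rw [hinner1' H, mul_smul_comm, Matrix.trace_smul, W_HEH, smul_eq_mul]
  have W_HEHEHE : (H * (E * (H * (E * (H * E))))).trace = a1 * (a1 * a1) := by
    rw [hinner1' (H*E), mul_smul_comm, Matrix.trace_smul, W_HEHE, smul_eq_mul]
  -- expansion of N
  have hNexp : N = H - c • (H * E) := by
    rw [hNdef, hPdef, Matrix.mul_sub, Matrix.mul_one, mul_smul_comm]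
  have htrN : N.trace = t1 - c * a1 := by
    rw [hNexp, Matrix.trace_sub, Matrix.trace_smul, W_HE, smul_eq_mul, ← ht1]
  have htrNN : (N * N).trace = t2 - 2*(c*a2) + (c*c)*(a1*a1) := by
    rw [hNexp]
    simp only [Matrix.mul_sub, Matrix.sub_mul, mul_smul_comm, smul_mul_assoc, smul_smul,
      smul_sub, Matrix.mul_assoc, Matrix.trace_sub, Matrix.trace_smul, smul_eq_mul,
      W_HHE, W_HEH, W_HEHE, ← ht2]
    ring
  have htrNNN : (N * (N * N)).trace
      = t3 - 3*(c*a3) + 3*((c*c)*(a1*a2)) - (c*c*c)*(a1*(a1*a1)) := by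
    rw [hNexp]
    simp only [Matrix.mul_sub, Matrix.sub_mul, mul_smul_comm, smul_mul_assoc, smul_smul,
      smul_sub, Matrix.mul_assoc, Matrix.trace_sub, Matrix.trace_smul, smul_eq_mul,
      W_HHHE, W_HHEH, W_HEHH, W_HHEHE, W_HEHHE, W_HEHEH, W_HEHEHE, ← ht3]
    ring
  have hE3 : 0 ≤ (t1 - c*a1)^3 - 3*(t1 - c*a1)*(t2 - 2*(c*a2) + (c*c)*(a1*a1))
      + 2*(t3 - 3*(c*a3) + 3*((c*c)*(a1*a2)) - (c*c*c)*(a1*(a1*a1))) := by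
    have h := E3_nonneg hMpsd
    rwa [trM1, trM2, trM3, htrN, htrNN, htrNNN] at h
  -- statement-side computations
  have hgH : g ᵥ* H = H *ᵥ g := by
    conv_lhs => rw [← hH]
    rw [Matrix.vecMul_transpose]
  have e2 : g ⬝ᵥ ((H * H) *ᵥ g) = (H *ᵥ g) ⬝ᵥ (H *ᵥ g) := by
    rw [← Matrix.mulVec_mulVec, Matrix.dotProduct_mulVec, hgH]
  have hw2 : (H *ᵥ g) ⬝ᵥ (H *ᵥ g) = a2 := by rw [ha2, e2]
  have e3 : g ⬝ᵥ ((H * (H * H)) *ᵥ g) = (H *ᵥ (H *ᵥ g)) ⬝ᵥ (H *ᵥ g) := by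
    rw [← Matrix.mulVec_mulVec, ← Matrix.mulVec_mulVec, Matrix.dotProduct_mulVec, hgH,
      dotProduct_comm]
  have hw3 : (H *ᵥ (H *ᵥ g)) ⬝ᵥ (H *ᵥ g) = a3 := by rw [ha3, e3]
  have hwa1 : (H *ᵥ g) ⬝ᵥ g = a1 := by rw [ha1, dotProduct_comm]
  have hS2 : S2 H = (1/2)*(t1^2 - t2) := by rw [S2, ← ht1, ← ht2]
  have hstmtL : ((t1 • (1 : Matrix (Fin n) (Fin n) ℝ) - H) * (H * H)).trace
      = t1*t2 - t3 := by
    rw [Matrix.sub_mul, smul_mul_assoc, Matrix.one_mul, Matrix.trace_sub,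
      Matrix.trace_smul, smul_eq_mul, ← ht2, ← ht3]
  have hstmtR : ((t1 • (1 : Matrix (Fin n) (Fin n) ℝ) - H) *ᵥ (H *ᵥ g)) ⬝ᵥ (H *ᵥ g)
      = t1*a2 - a3 := by
    rw [Matrix.sub_mulVec, sub_dotProduct, Matrix.smul_mulVec,
      Matrix.one_mulVec, smul_dotProduct, smul_eq_mul, hw2, hw3]
  rw [hS2, hstmtL, hstmtR, hwa1]
  have hident : (2*(t1*a2 - a3) - 2*((1/2)*(t1^2 - t2))*a1)
      - ((1/3)*r*(2*(t1*t2 - t3) - 2*((1/2)*(t1^2 - t2))*t1))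
      = (r/3)*((t1 - c*a1)^3 - 3*(t1 - c*a1)*(t2 - 2*(c*a2) + (c*c)*(a1*a1))
        + 2*(t3 - 3*(c*a3) + 3*((c*c)*(a1*a2)) - (c*c*c)*(a1*(a1*a1)))) := by
    rw [hcdef]
    field_simp
    ring
  have hprod : 0 ≤ (r/3)*((t1 - c*a1)^3 - 3*(t1 - c*a1)*(t2 - 2*(c*a2) + (c*c)*(a1*a1))
        + 2*(t3 - 3*(c*a3) + 3*((c*c)*(a1*a2)) - (c*c*c)*(a1*(a1*a1)))) :=
    mul_nonneg (by positivity) hE3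
  linarith [hident, hprod]

set_option maxHeartbeats 1000000 in
lemma hess_nonneg_on_perp {n : ℕ}
    (Ω : Set (EuclideanSpace ℝ (Fin n))) (hΩo : IsOpen Ω)
    (u : EuclideanSpace ℝ (Fin n) → ℝ) (hu : ContDiffOn ℝ 2 u Ω)
    (I : Set ℝ) (hIsub : u '' Ω ⊆ I)
    (U : ℝ → ℝ) (hUmono : StrictMonoOn U I)
    (hconv : ConvexOn ℝ Ω (fun x => U (u x)))
    {x : EuclideanSpace ℝ (Fin n)} (hx : x ∈ Ω)
    (v : EuclideanSpace ℝ (Fin n)) (hv0 : fderiv ℝ u x v = 0) :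
    0 ≤ fderiv ℝ (fderiv ℝ u) x v v := by
  by_contra hneg
  push_neg at hneg
  set γ : ℝ → EuclideanSpace ℝ (Fin n) := fun τ => x + τ • v with hγdef
  have hγ0 : γ 0 = x := by simp [hγdef]
  have hγcont : Continuous γ := by
    apply continuous_const.add
    exact continuous_id.smul continuous_const
  have hTopen : IsOpen (γ ⁻¹' Ω) := hΩo.preimage hγcont
  have h0T : (0 : ℝ) ∈ γ ⁻¹' Ω := by simp [Set.mem_preimage, hγ0, hx]
  obtain ⟨ε, hε, hball⟩ := Metric.isOpen_iff.mp hTopen 0 h0T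
  have hballΩ : ∀ τ : ℝ, |τ| < ε → γ τ ∈ Ω := by
    intro τ hτ
    exact hball (by simpa [Real.dist_eq] using hτ)
  -- derivative of φ = u ∘ γ
  have hγd : ∀ τ : ℝ, HasDerivAt γ v τ := by
    intro τ
    have h1 : HasDerivAt (fun t : ℝ => t • v) ((1:ℝ) • v) τ :=
      (hasDerivAt_id τ).smul_const v
    rw [one_smul] at h1; exact h1.const_add x
  have hφ' : ∀ τ : ℝ, |τ| < ε →
      HasDerivAt (fun t => u (γ t)) (fderiv ℝ u (γ τ) v) τ := by
    intro τ hτ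
    have hdiff : DifferentiableAt ℝ u (γ τ) :=
      (hu.contDiffAt (hΩo.mem_nhds (hballΩ τ hτ))).differentiableAt (by norm_num)
    exact hdiff.hasFDerivAt.comp_hasDerivAt τ (hγd τ)
  -- derivative of ψ = (fderiv u ∘ γ) applied to v, at 0
  set ψ : ℝ → ℝ := fun τ => fderiv ℝ u (γ τ) v with hψdef
  have hψ0 : ψ 0 = 0 := by rw [hψdef]; simp [hγ0, hv0]
  have hF : DifferentiableAt ℝ (fderiv ℝ u) x := by
    have h2 : ContDiffAt ℝ 2 u x := hu.contDiffAt (hΩo.mem_nhds hx)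
    exact (h2.fderiv_right (m := 1) (by norm_num)).differentiableAt (by norm_num)
  have hψd : HasDerivAt ψ (fderiv ℝ (fderiv ℝ u) x v v) 0 := by
    have hcomp : HasDerivAt (fun τ => fderiv ℝ u (γ τ)) (fderiv ℝ (fderiv ℝ u) x v) 0 := by
      have h0 : HasFDerivAt (fderiv ℝ u) (fderiv ℝ (fderiv ℝ u) x) (γ 0) :=
        hγ0.symm ▸ hF.hasFDerivAt
      exact h0.comp_hasDerivAt 0 (hγd 0)
    have h2 := hcomp.clm_apply (hasDerivAt_const 0 v)
    simpa using h2
  -- slope of ψ is eventually negative near 0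
  have hslope : ∀ᶠ τ in nhdsWithin 0 {(0:ℝ)}ᶜ, slope ψ 0 τ < 0 :=
    (hasDerivAt_iff_tendsto_slope.mp hψd).eventually_lt_const hneg
  rw [Filter.eventually_iff_exists_mem] at hslope
  obtain ⟨s, hs, hsneg⟩ := hslope
  rw [mem_nhdsWithin] at hs
  obtain ⟨t, htop, ht0, hts⟩ := hs
  obtain ⟨δ, hδ, hδball⟩ := Metric.isOpen_iff.mp htop 0 ht0
  have hψsign : ∀ τ : ℝ, τ ≠ 0 → |τ| < δ → ψ τ / τ < 0 := by
    intro τ hτ0 hτδ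
    have h1 : τ ∈ t ∩ {(0:ℝ)}ᶜ :=
      ⟨hδball (by simpa [Real.dist_eq] using hτδ), hτ0⟩
    have := hsneg τ (hts h1)
    simpa [slope_def_field, hψ0] using this
  -- pick ρ
  set ρ : ℝ := min δ ε / 2 with hρdef
  have hρpos : 0 < ρ := by positivity
  have hρδ : ρ < δ := by
    have : min δ ε ≤ δ := min_le_left _ _
    linarith
  have hρε : ρ < ε := by
    have : min δ ε ≤ ε := min_le_right _ _
    linarith
  -- φ strictly decreasing on [0, ρ]
  have hcontφ : ∀ τ ∈ Set.Icc (-ρ) ρ, ContinuousAt (fun t => u (γ t)) τ := by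
    intro τ hτ
    have : |τ| < ε := by
      rw [abs_lt]; constructor <;> [linarith [hτ.1]; linarith [hτ.2]]
    exact (hφ' τ this).continuousAt
  have hanti : StrictAntiOn (fun t => u (γ t)) (Set.Icc 0 ρ) := by
    apply strictAntiOn_of_deriv_neg (convex_Icc 0 ρ)
    · intro τ hτ
      exact (hcontφ τ ⟨by linarith [hτ.1, hρpos], hτ.2⟩).continuousWithinAt
    · intro τ hτ
      rw [interior_Icc] at hτ
      have hτε : |τ| < ε := by rw [abs_lt]; exact ⟨by linarith [hτ.1], by linarith [hτ.2]⟩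
      rw [(hφ' τ hτε).deriv]
      have hs := hψsign τ (ne_of_gt hτ.1) (by rw [abs_lt]; exact ⟨by linarith [hτ.1], by linarith [hτ.2]⟩)
      rcases div_neg_iff.mp hs with ⟨h1, h2⟩ | ⟨h1, h2⟩
      · linarith [hτ.1]
      · exact h1
  have hmono : StrictMonoOn (fun t => u (γ t)) (Set.Icc (-ρ) 0) := by
    apply strictMonoOn_of_deriv_pos (convex_Icc (-ρ) 0)
    · intro τ hτ
      exact (hcontφ τ ⟨hτ.1, by linarith [hτ.2, hρpos]⟩).continuousWithinAt
    · intro τ hτ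
      rw [interior_Icc] at hτ
      have hτε : |τ| < ε := by rw [abs_lt]; exact ⟨by linarith [hτ.1], by linarith [hτ.2]⟩
      rw [(hφ' τ hτε).deriv]
      have hs := hψsign τ (ne_of_lt hτ.2) (by rw [abs_lt]; exact ⟨by linarith [hτ.1], by linarith [hτ.2]⟩)
      rcases div_neg_iff.mp hs with ⟨h1, h2⟩ | ⟨h1, h2⟩
      · exact h1
      · linarith [hτ.2]
  have hu1 : u (γ ρ) < u x := by
    have := hanti (Set.left_mem_Icc.mpr hρpos.le) (Set.right_mem_Icc.mpr hρpos.le) hρpos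
    simpa [hγ0] using this
  have hu2 : u (γ (-ρ)) < u x := by
    have := hmono (Set.left_mem_Icc.mpr (by linarith)) (Set.right_mem_Icc.mpr (by linarith))
      (by linarith : -ρ < 0)
    simpa [hγ0] using this
  -- convexity contradiction
  have hm1 : γ ρ ∈ Ω := hballΩ ρ (by rw [abs_of_pos hρpos]; exact hρε)
  have hm2 : γ (-ρ) ∈ Ω := hballΩ (-ρ) (by rw [abs_neg, abs_of_pos hρpos]; exact hρε)
  have hcvx := hconv.2 hm1 hm2 (by norm_num : (0:ℝ) ≤ 1/2) (by norm_num : (0:ℝ) ≤ 1/2)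
    (by norm_num : (1:ℝ)/2 + 1/2 = 1)
  have hmid : (1/2 : ℝ) • γ ρ + (1/2 : ℝ) • γ (-ρ) = x := by
    rw [hγdef]
    simp only []
    module
  rw [hmid] at hcvx
  have hIx : u x ∈ I := hIsub ⟨x, hx, rfl⟩
  have hI1 : u (γ ρ) ∈ I := hIsub ⟨γ ρ, hm1, rfl⟩
  have hI2 : u (γ (-ρ)) ∈ I := hIsub ⟨γ (-ρ), hm2, rfl⟩
  have hU1 : U (u (γ ρ)) < U (u x) := hUmono hI1 hIx hu1
  have hU2 : U (u (γ (-ρ))) < U (u x) := hUmono hI2 hIx hu2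
  simp only [smul_eq_mul] at hcvx
  linarith

lemma euclid_decomp {n : ℕ} (w : EuclideanSpace ℝ (Fin n)) :
    w = ∑ i, w i • EuclideanSpace.single i (1 : ℝ) := by
  ext j
  rw [WithLp.ofLp_sum, Finset.sum_apply]
  simp [EuclideanSpace.single_apply, Finset.sum_ite_eq']

lemma bilin_expand {n : ℕ} (B : EuclideanSpace ℝ (Fin n) →L[ℝ] EuclideanSpace ℝ (Fin n) →L[ℝ] ℝ)
    (v : EuclideanSpace ℝ (Fin n)) :
    B v v = ∑ i, ∑ j, v i * v j *
      B (EuclideanSpace.single i (1:ℝ)) (EuclideanSpace.single j (1:ℝ)) := by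
  conv_lhs => rw [euclid_decomp v]
  rw [map_sum B (fun i => v i • EuclideanSpace.single i (1:ℝ)) Finset.univ,
    ContinuousLinearMap.sum_apply]
  apply Finset.sum_congr rfl
  intro i _
  rw [_root_.map_smul, ContinuousLinearMap.smul_apply,
    map_sum (B (EuclideanSpace.single i (1:ℝ))) (fun j => v j • EuclideanSpace.single j (1:ℝ))
      Finset.univ]
  rw [smul_eq_mul, Finset.mul_sum]
  apply Finset.sum_congr rfl
  intro j _
  rw [_root_.map_smul, smul_eq_mul]
  ring


/-- If `Ω ⊂ ℝ^n` (`n ≥ 3`) is open convex, `u ∈ C²(Ω)`, and there is a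
strictly increasing `C²` function `U` on an open interval `I ⊇ u(Ω)` with `x ↦ U(u(x))`
convex on `Ω`, then for every `x ∈ Ω`, with `H := D²u(x)`, `g := ∇u(x)`, `s := tr H`:
`(1/3)‖g‖²[2 tr((s I − H) H²) − 2 S₂(H) s] ≤ 2⟨(s I − H) H g, H g⟩ − 2 S₂(H)⟨H g, g⟩`. -/
theorem hessian_estimate_of_increasing_convexification {n : ℕ} (hn : 3 ≤ n)
    (Ω : Set (EuclideanSpace ℝ (Fin n))) (hΩo : IsOpen Ω) (hΩconv : Convex ℝ Ω)
    (u : EuclideanSpace ℝ (Fin n) → ℝ) (hu : ContDiffOn ℝ 2 u Ω)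
    (I : Set ℝ) (hIo : IsOpen I) (hIint : I.OrdConnected) (hIsub : u '' Ω ⊆ I)
    (U : ℝ → ℝ) (hU : ContDiffOn ℝ 2 U I) (hUmono : StrictMonoOn U I)
    (hconv : ConvexOn ℝ Ω (fun x => U (u x))) :
    ∀ x ∈ Ω,
      (1 / 3) * (gradVec u x ⬝ᵥ gradVec u x) *
          (2 * (((hessianMatrix u x).trace • (1 : Matrix (Fin n) (Fin n) ℝ)
                  - hessianMatrix u x) * (hessianMatrix u x * hessianMatrix u x)).trace
            - 2 * S2 (hessianMatrix u x) * (hessianMatrix u x).trace)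
        ≤ 2 * ((((hessianMatrix u x).trace • (1 : Matrix (Fin n) (Fin n) ℝ)
                  - hessianMatrix u x) *ᵥ (hessianMatrix u x *ᵥ gradVec u x)) ⬝ᵥ
                (hessianMatrix u x *ᵥ gradVec u x))
            - 2 * S2 (hessianMatrix u x) *
                ((hessianMatrix u x *ᵥ gradVec u x) ⬝ᵥ gradVec u x) := by
  intro x hx
  have hxd : ContDiffAt ℝ 2 u x := hu.contDiffAt (hΩo.mem_nhds hx)
  have hdiff : DifferentiableAt ℝ u x := hxd.differentiableAt (by norm_num)
  have hHij : ∀ i j, hessianMatrix u x i j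
      = fderiv ℝ (fderiv ℝ u) x (EuclideanSpace.single i (1:ℝ))
          (EuclideanSpace.single j (1:ℝ)) := by
    intro i j
    rw [hessianMatrix, iteratedFDeriv_two_apply]
    simp
  have hsymB : IsSymmSndFDerivAt ℝ u x := hxd.isSymmSndFDerivAt (by norm_num)
  have hHsym : (hessianMatrix u x)ᵀ = hessianMatrix u x := by
    ext i j
    rw [Matrix.transpose_apply, hHij, hHij]
    exact hsymB _ _
  have hgrad : ∀ w : EuclideanSpace ℝ (Fin n),
      fderiv ℝ u x w = gradVec u x ⬝ᵥ (fun i => w i) := by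
    intro w
    have hg : HasFDerivAt u ((InnerProductSpace.toDual ℝ _) (gradient u x)) x :=
      hdiff.hasGradientAt.hasFDerivAt
    rw [hg.fderiv]
    rw [InnerProductSpace.toDual_apply_apply]
    simp only [PiLp.inner_apply, RCLike.inner_apply, conj_trivial, dotProduct, gradVec]
    apply Finset.sum_congr rfl; intro i _; ring
  have hquad : ∀ w : EuclideanSpace ℝ (Fin n),
      fderiv ℝ (fderiv ℝ u) x w w
        = (fun i => w i) ⬝ᵥ (hessianMatrix u x *ᵥ fun i => w i) := by
    intro w
    rw [bilin_expand (fderiv ℝ (fderiv ℝ u) x) w]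
    simp only [dotProduct, Matrix.mulVec, Finset.mul_sum]
    apply Finset.sum_congr rfl
    intro i _
    apply Finset.sum_congr rfl
    intro j _
    rw [hHij]
    ring
  have hpos : ∀ v : Fin n → ℝ, gradVec u x ⬝ᵥ v = 0
      → 0 ≤ v ⬝ᵥ (hessianMatrix u x *ᵥ v) := by
    intro v hv
    have h0 : fderiv ℝ u x ((WithLp.equiv 2 (Fin n → ℝ)).symm v) = 0 := by
      rw [hgrad]
      exact hv
    have h1 := hess_nonneg_on_perp Ω hΩo u hu I hIsub U hUmono hconv hx
      ((WithLp.equiv 2 (Fin n → ℝ)).symm v) h0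
    rw [hquad] at h1
    exact h1
  exact key_alg (hessianMatrix u x) hHsym (gradVec u x) hpos
end

section
/- Let Ω ⊂ ℝ^N (N ≥ 3) be an open convex set, let u ∈ C²(Ω), and suppose there exists a strictly decreasing function U ∈ C²(I), defined on an open interval I containing u(Ω), such that the composition x ↦ U(u(x)) is convex on Ω. Then for every x ∈ Ω, writing H := D²u(x), g := ∇u(x), and s := tr(H), the reversed inequality holds: (1/3)‖g‖²·[2·tr((s·I − H)·H²) − 2·S₂(H)·s] ≥ 2⟨(s·I − H)·H g, H g⟩ − 2·S₂(H)·⟨H g, g⟩. -/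
open Matrix

namespace HEstAux

variable {n : ℕ}

/-- elementary symmetric e2 via power sums -/
noncomputable def E2 (l : Fin n → ℝ) (S : Finset (Fin n)) : ℝ :=
  ((∑ i ∈ S, l i) ^ 2 - (∑ i ∈ S, l i ^ 2)) / 2

/-- elementary symmetric e3 via power sums -/
noncomputable def E3 (l : Fin n → ℝ) (S : Finset (Fin n)) : ℝ :=
  ((∑ i ∈ S, l i) ^ 3 - 3 * (∑ i ∈ S, l i) * (∑ i ∈ S, l i ^ 2)
    + 2 * (∑ i ∈ S, l i ^ 3)) / 6

lemma E2_erase (l : Fin n → ℝ) {S : Finset (Fin n)} {j : Fin n} (hj : j ∈ S) :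
    E2 l S = l j * (∑ i ∈ S.erase j, l i) + E2 l (S.erase j) := by
  unfold E2
  rw [← Finset.sum_erase_add S l hj, ← Finset.sum_erase_add S (fun i => l i ^ 2) hj]
  ring

lemma E3_erase (l : Fin n → ℝ) {S : Finset (Fin n)} {j : Fin n} (hj : j ∈ S) :
    E3 l S = l j * E2 l (S.erase j) + E3 l (S.erase j) := by
  unfold E3 E2
  rw [← Finset.sum_erase_add S l hj, ← Finset.sum_erase_add S (fun i => l i ^ 2) hj,
    ← Finset.sum_erase_add S (fun i => l i ^ 3) hj]
  ring

lemma E2_nonneg {l : Fin n → ℝ} {S : Finset (Fin n)} (h : ∀ i ∈ S, l i ≤ 0) :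
    0 ≤ E2 l S := by
  induction S using Finset.induction_on with
  | empty => simp [E2]
  | @insert a s ha ih =>
    have h' : ∀ i ∈ s, l i ≤ 0 := fun i hi => h i (Finset.mem_insert_of_mem hi)
    have hrw := E2_erase l (S := insert a s) (j := a) (Finset.mem_insert_self a s)
    rw [Finset.erase_insert ha] at hrw
    rw [hrw]
    have h1 : 0 ≤ l a * ∑ i ∈ s, l i := by
      have := h a (Finset.mem_insert_self a s)
      have := Finset.sum_nonpos h'
      nlinarith
    linarith [ih h']

lemma E3_nonpos {l : Fin n → ℝ} {S : Finset (Fin n)} (h : ∀ i ∈ S, l i ≤ 0) :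
    E3 l S ≤ 0 := by
  induction S using Finset.induction_on with
  | empty => simp [E3]
  | @insert a s ha ih =>
    have h' : ∀ i ∈ s, l i ≤ 0 := fun i hi => h i (Finset.mem_insert_of_mem hi)
    have hrw := E3_erase l (S := insert a s) (j := a) (Finset.mem_insert_self a s)
    rw [Finset.erase_insert ha] at hrw
    rw [hrw]
    have h1 : l a * E2 l s ≤ 0 :=
      mul_nonpos_of_nonpos_of_nonneg (h a (Finset.mem_insert_self a s)) (E2_nonneg h')
    linarith [ih h']

/-- the "characteristic cubic" identity -/
lemma chi_erase (l : Fin n → ℝ) {S : Finset (Fin n)} {j : Fin n} (hj : j ∈ S) :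
    l j ^ 3 - (∑ i ∈ S, l i) * l j ^ 2 + E2 l S * l j - E3 l S
      = - E3 l (S.erase j) := by
  unfold E3 E2
  rw [← Finset.sum_erase_add S l hj, ← Finset.sum_erase_add S (fun i => l i ^ 2) hj,
    ← Finset.sum_erase_add S (fun i => l i ^ 3) hj]
  ring

end HEstAux

namespace HEstAux
open Finset
variable {n : ℕ}

lemma sum_single_term (f : Fin n → ℝ) (i : Fin n) (hf : ∀ k, k ≠ i → f k = 0) :
    ∑ k, f k = f i := by
  rw [← Finset.sum_subset (Finset.subset_univ {i}) (fun x _ hx => hf x (by simpa using hx))]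
  simp

lemma sum_two_terms (f : Fin n → ℝ) {i j : Fin n} (hij : i ≠ j)
    (hf : ∀ k, k ≠ i → k ≠ j → f k = 0) :
    ∑ k, f k = f i + f j := by
  rw [← Finset.sum_subset (Finset.subset_univ {i, j})
    (fun x _ hx => by
      simp only [Finset.mem_insert, Finset.mem_singleton] at hx
      push_neg at hx
      exact hf x hx.1 hx.2)]
  exact Finset.sum_pair hij

theorem scalar_core (l d : Fin n → ℝ) (c : ℝ)
    (K : ∀ v : Fin n → ℝ, (∑ i, l i * v i ^ 2) ≤ c * (∑ i, d i * v i) ^ 2) :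
    0 ≤ ∑ k, d k ^ 2 *
      (l k ^ 3 - (∑ i, l i) * l k ^ 2 + E2 l Finset.univ * l k - E3 l Finset.univ) := by
  have hrewrite : (∑ k, d k ^ 2 *
      (l k ^ 3 - (∑ i, l i) * l k ^ 2 + E2 l Finset.univ * l k - E3 l Finset.univ))
      = ∑ k, d k ^ 2 * (- E3 l (Finset.univ.erase k)) :=
    Finset.sum_congr rfl (fun k _ => by rw [chi_erase l (Finset.mem_univ k)])
  rw [hrewrite]
  by_cases hneg : ∀ i, l i ≤ 0
  · apply Finset.sum_nonneg
    intro k _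
    have h3 : E3 l (Finset.univ.erase k) ≤ 0 := E3_nonpos (fun j _ => hneg j)
    have : 0 ≤ - E3 l (Finset.univ.erase k) := by linarith
    positivity
  · push_neg at hneg
    obtain ⟨i0, hl0⟩ := hneg
    -- diagonal test vector
    have hdiag : l i0 ≤ c * d i0 ^ 2 := by
      have hv := K (fun k => if k = i0 then 1 else 0)
      have h1 : (∑ i, l i * (if i = i0 then (1:ℝ) else 0) ^ 2) = l i0 := by
        rw [sum_single_term _ i0 (fun k hk => by simp [hk])]; simp
      have h2 : (∑ i, d i * (if i = i0 then (1:ℝ) else 0)) = d i0 := by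
        rw [sum_single_term _ i0 (fun k hk => by simp [hk])]; simp
      rw [h1, h2] at hv
      exact hv
    have hd0 : d i0 ≠ 0 := by
      intro h
      rw [h] at hdiag
      simp at hdiag
      linarith
    have hd0sq : 0 < d i0 ^ 2 := by positivity
    -- pair test vectors
    have hpair : ∀ j, j ≠ i0 → l i0 * d j ^ 2 + l j * d i0 ^ 2 ≤ 0 := by
      intro j hj
      have hji : i0 ≠ j := Ne.symm hj
      have hv := K (fun k => if k = i0 then d j else if k = j then -(d i0) else 0)
      have h1 : (∑ i, l i * (if i = i0 then d j else if i = j then -(d i0) else 0) ^ 2)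
          = l i0 * d j ^ 2 + l j * d i0 ^ 2 := by
        rw [sum_two_terms _ hji (fun k hk1 hk2 => by simp [hk1, hk2])]
        rw [if_pos rfl, if_neg hj, if_pos rfl]
        ring
      have h2 : (∑ i, d i * (if i = i0 then d j else if i = j then -(d i0) else 0)) = 0 := by
        rw [sum_two_terms _ hji (fun k hk1 hk2 => by simp [hk1, hk2])]
        rw [if_pos rfl, if_neg hj, if_pos rfl]
        ring
      rw [h1, h2] at hv
      simpa using hv
    have hlneg : ∀ j, j ≠ i0 → l j ≤ 0 := by
      intro j hj
      have h := hpair j hj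
      nlinarith [sq_nonneg (d j)]
    have hdzero : ∀ j, j ≠ i0 → 0 ≤ l j → d j = 0 := by
      intro j hj hlj
      have hlj0 : l j = 0 := le_antisymm (hlneg j hj) hlj
      have h := hpair j hj
      rw [hlj0] at h
      have hsq : d j ^ 2 = 0 := by nlinarith [sq_nonneg (d j)]
      exact pow_eq_zero_iff two_ne_zero |>.mp hsq
    -- the weights t
    set t : Fin n → ℝ := fun j => if l j < 0 then d j ^ 2 / (- l j) else 0 with ht
    have htnn : ∀ j, 0 ≤ t j := by
      intro j
      rw [ht]
      dsimp only
      split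
      · exact div_nonneg (sq_nonneg _) (by linarith [show l j < 0 from by assumption])
      · exact le_refl 0
    set T := ∑ j ∈ Finset.univ.erase i0, t j with hT
    have hTnn : 0 ≤ T := Finset.sum_nonneg (fun j _ => htnn j)
    have hdt : ∀ j, j ≠ i0 → d j ^ 2 = t j * (- l j) := by
      intro j hj
      by_cases hlj : l j < 0
      · rw [ht]
        dsimp only
        rw [if_pos hlj]
        rw [div_mul_cancel₀ (d j ^ 2) (show (-l j) ≠ 0 by linarith)]
      · have hdj : d j = 0 := hdzero j hj (not_lt.mp hlj)
        rw [ht]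
        dsimp only
        rw [if_neg hlj, hdj]
        ring
    -- key estimate : l i0 * T ≤ d i0 ^ 2
    have hkey : l i0 * T ≤ d i0 ^ 2 := by
      rcases eq_or_lt_of_le hTnn with h0 | hTpos
      · rw [← h0]
        simpa using hd0sq.le
      · set v : Fin n → ℝ :=
          fun k => if k = i0 then -T / d i0 else if l k < 0 then d k / (- l k) else 0 with hvdef
        have hterm1 : ∀ j ∈ Finset.univ.erase i0, l j * v j ^ 2 = - t j := by
          intro j hj
          have hj' : j ≠ i0 := (Finset.mem_erase.mp hj).1
          by_cases hlj : l j < 0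
          · rw [hvdef, ht]
            dsimp only
            rw [if_neg hj', if_pos hlj, if_pos hlj]
            have hljne : l j ≠ 0 := ne_of_lt hlj
            field_simp
          · have hdj : d j = 0 := hdzero j hj' (not_lt.mp hlj)
            rw [hvdef, ht]
            dsimp only
            rw [if_neg hj', if_neg hlj, if_neg hlj]
            norm_num
        have hterm2 : ∀ j ∈ Finset.univ.erase i0, d j * v j = t j := by
          intro j hj
          have hj' : j ≠ i0 := (Finset.mem_erase.mp hj).1
          by_cases hlj : l j < 0
          · rw [hvdef, ht]
            dsimp only
            rw [if_neg hj', if_pos hlj, if_pos hlj]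
            have hljne : l j ≠ 0 := ne_of_lt hlj
            field_simp
          · have hdj : d j = 0 := hdzero j hj' (not_lt.mp hlj)
            rw [hvdef, ht]
            dsimp only
            rw [if_neg hj', if_neg hlj, if_neg hlj]
            norm_num
        have hsum1 : (∑ i, l i * v i ^ 2) = l i0 * (T / d i0) ^ 2 - T := by
          rw [← Finset.add_sum_erase _ _ (Finset.mem_univ i0)]
          rw [Finset.sum_congr rfl hterm1, Finset.sum_neg_distrib, ← hT]
          rw [hvdef]
          dsimp only
          rw [if_pos rfl]
          rw [neg_div]
          ring
        have hsum2 : (∑ i, d i * v i) = 0 := by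
          rw [← Finset.add_sum_erase _ _ (Finset.mem_univ i0)]
          rw [Finset.sum_congr rfl hterm2, ← hT]
          rw [hvdef]
          dsimp only
          rw [if_pos rfl]
          field_simp
          ring
        have hv := K v
        rw [hsum1, hsum2] at hv
        have h1 : l i0 * (T / d i0) ^ 2 ≤ T := by simpa using hv
        rw [div_pow, ← mul_div_assoc] at h1
        have h2 : l i0 * T ^ 2 ≤ T * d i0 ^ 2 := (div_le_iff₀ hd0sq).mp h1
        have h3 : (l i0 * T) * T ≤ (d i0 ^ 2) * T := by nlinarith
        exact le_of_mul_le_mul_right h3 hTpos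
    -- final assembly
    set E3' := E3 l (Finset.univ.erase i0) with hE3'def
    have hE3'np : E3' ≤ 0 :=
      E3_nonpos (fun j hj => hlneg j (Finset.mem_erase.mp hj).1)
    have hj_bound : ∀ j ∈ Finset.univ.erase i0,
        -(l i0 * (t j * (- E3'))) ≤ d j ^ 2 * (- E3 l (Finset.univ.erase j)) := by
      intro j hj
      have hj' : j ≠ i0 := (Finset.mem_erase.mp hj).1
      have hmem : i0 ∈ Finset.univ.erase j :=
        Finset.mem_erase.mpr ⟨Ne.symm hj', Finset.mem_univ _⟩
      have hrw := E3_erase l hmem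
      rw [Finset.erase_right_comm] at hrw
      set Sj := (Finset.univ.erase i0).erase j with hSjdef
      have hSneg : ∀ i ∈ Sj, l i ≤ 0 := by
        intro i hi
        exact hlneg i (Finset.mem_erase.mp (Finset.mem_of_mem_erase hi)).1
      have hE3Sj : E3 l Sj ≤ 0 := E3_nonpos hSneg
      by_cases hlj : l j < 0
      · have hdj : d j ^ 2 = t j * (- l j) := hdt j hj'
        have htj : 0 ≤ t j := htnn j
        have hE3'eq : E3' = l j * E2 l Sj + E3 l Sj := E3_erase l hj
        have s1 : (- l j) * E2 l Sj ≤ - E3' := by rw [hE3'eq]; linarith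
        have s2 : l i0 * t j * ((- l j) * E2 l Sj) ≤ l i0 * t j * (- E3') :=
          mul_le_mul_of_nonneg_left s1 (mul_nonneg hl0.le htj)
        have s3 : d j ^ 2 * (-(l i0 * E2 l Sj)) ≤ d j ^ 2 * (- E3 l (Finset.univ.erase j)) := by
          apply mul_le_mul_of_nonneg_left _ (sq_nonneg _)
          rw [hrw]
          linarith
        have heq : d j ^ 2 * (-(l i0 * E2 l Sj)) = -(l i0 * t j * ((- l j) * E2 l Sj)) := by
          rw [hdj]; ring
        have heq2 : -(l i0 * (t j * (- E3'))) = -(l i0 * t j * (- E3')) := by ring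
        linarith
      · have hdj : d j = 0 := hdzero j hj' (not_lt.mp hlj)
        have htj : t j = 0 := by rw [ht]; dsimp only; rw [if_neg hlj]
        rw [hdj, htj]
        simp
    have hges := Finset.sum_le_sum hj_bound
    have hsumeq : (∑ j ∈ Finset.univ.erase i0, -(l i0 * (t j * (- E3'))))
        = (l i0 * E3') * T := by
      rw [hT, Finset.mul_sum]
      apply Finset.sum_congr rfl
      intro j _
      ring
    rw [← Finset.add_sum_erase _ _ (Finset.mem_univ i0)]
    rw [hsumeq] at hges
    have hprod : 0 ≤ (d i0 ^ 2 - l i0 * T) * (- E3') :=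
      mul_nonneg (sub_nonneg.mpr hkey) (neg_nonneg.mpr hE3'np)
    have hfin : 0 ≤ d i0 ^ 2 * (- E3') + (l i0 * E3') * T := by nlinarith
    linarith

end HEstAux


namespace HEstAux

theorem matrix_core {n : ℕ} (H : Matrix (Fin n) (Fin n) ℝ) (hH : H.IsHermitian)
    (g : Fin n → ℝ) (c : ℝ)
    (K : ∀ v : Fin n → ℝ, v ⬝ᵥ (H *ᵥ v) ≤ c * (g ⬝ᵥ v) ^ 2) :
    (1 / 3) * (g ⬝ᵥ g) *
        (2 * ((H.trace • (1 : Matrix (Fin n) (Fin n) ℝ) - H) * (H * H)).trace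
          - 2 * S2 H * H.trace)
      ≥ 2 * (((H.trace • (1 : Matrix (Fin n) (Fin n) ℝ) - H) *ᵥ (H *ᵥ g)) ⬝ᵥ (H *ᵥ g))
          - 2 * S2 H * ((H *ᵥ g) ⬝ᵥ g) := by
  classical
  set Q : Matrix (Fin n) (Fin n) ℝ := (hH.eigenvectorUnitary : Matrix (Fin n) (Fin n) ℝ) with hQdef
  set lam : Fin n → ℝ := hH.eigenvalues with hlamdef
  set D : Matrix (Fin n) (Fin n) ℝ := Matrix.diagonal lam with hDdef
  have hQ1 : Q * star Q = 1 := (Matrix.mem_unitaryGroup_iff).mp hH.eigenvectorUnitary.2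
  have hQ2 : star Q * Q = 1 := mul_eq_one_comm.mp hQ1
  have hspec : H = Q * D * star Q := by
    have := hH.spectral_theorem
    rwa [RCLike.ofReal_real_eq_id, Function.id_comp] at this
  have hQmv : ∀ a : Fin n → ℝ, star Q *ᵥ (Q *ᵥ a) = a := by
    intro a; rw [Matrix.mulVec_mulVec, hQ2, Matrix.one_mulVec]
  have hQmv' : ∀ a : Fin n → ℝ, Q *ᵥ (star Q *ᵥ a) = a := by
    intro a; rw [Matrix.mulVec_mulVec, hQ1, Matrix.one_mulVec]
  have hvm : ∀ x : Fin n → ℝ, Matrix.vecMul x Q = star Q *ᵥ x := by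
    intro x
    ext j
    simp [Matrix.vecMul, Matrix.mulVec, dotProduct, Matrix.star_apply, mul_comm]
  have horth : ∀ a b : Fin n → ℝ, (Q *ᵥ a) ⬝ᵥ (Q *ᵥ b) = a ⬝ᵥ b := by
    intro a b
    rw [Matrix.dotProduct_mulVec, hvm, hQmv]
  set d : Fin n → ℝ := star Q *ᵥ g with hddef
  have hg : g = Q *ᵥ d := (hQmv' g).symm
  have hDd : ∀ a : Fin n → ℝ, D *ᵥ a = fun i => lam i * a i := by
    intro a; ext i; rw [hDdef]; exact Matrix.mulVec_diagonal lam a i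
  -- products conjugation
  have hprod : ∀ A B : Matrix (Fin n) (Fin n) ℝ,
      (Q * A * star Q) * (Q * B * star Q) = Q * (A * B) * star Q := by
    intro A B
    calc (Q * A * star Q) * (Q * B * star Q) = Q * A * (star Q * Q) * (B * star Q) := by
          noncomm_ring
      _ = Q * (A * B) * star Q := by rw [hQ2]; noncomm_ring
  have htr : ∀ A : Matrix (Fin n) (Fin n) ℝ, (Q * A * star Q).trace = A.trace := by
    intro A
    rw [Matrix.trace_mul_cycle, hQ2, Matrix.one_mul]
  -- traces
  have hT1 : H.trace = ∑ i, lam i := by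
    rw [hspec, htr, hDdef, Matrix.trace_diagonal]
  have hH2 : H * H = Q * (D * D) * star Q := by rw [hspec]; exact hprod D D
  have hT2 : (H * H).trace = ∑ i, lam i ^ 2 := by
    rw [hH2, htr, hDdef, Matrix.diagonal_mul_diagonal, Matrix.trace_diagonal]
    exact Finset.sum_congr rfl fun i _ => (sq (lam i)).symm ▸ by ring
  have hT3 : (H * (H * H)).trace = ∑ i, lam i ^ 3 := by
    rw [hH2, hspec, hprod, htr, hDdef, Matrix.diagonal_mul_diagonal,
      Matrix.diagonal_mul_diagonal, Matrix.trace_diagonal]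
    exact Finset.sum_congr rfl fun i _ => by ring
  -- dot products
  have hq0 : g ⬝ᵥ g = ∑ i, d i ^ 2 := by
    rw [hg, horth]
    exact Finset.sum_congr rfl fun i _ => by ring
  have hHg : H *ᵥ g = Q *ᵥ (D *ᵥ d) := by
    rw [hspec, hg, ← Matrix.mulVec_mulVec, ← Matrix.mulVec_mulVec, hQmv]
  have hHHg : H *ᵥ (H *ᵥ g) = Q *ᵥ (D *ᵥ (D *ᵥ d)) := by
    rw [hHg, hspec, ← Matrix.mulVec_mulVec, ← Matrix.mulVec_mulVec, hQmv]
  have hq1 : (H *ᵥ g) ⬝ᵥ g = ∑ i, d i ^ 2 * lam i := by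
    rw [hHg, hg, horth, hDd]
    exact Finset.sum_congr rfl fun i _ => by simp [dotProduct]; ring
  have hq2 : (H *ᵥ g) ⬝ᵥ (H *ᵥ g) = ∑ i, d i ^ 2 * lam i ^ 2 := by
    rw [hHg, horth, hDd]
    exact Finset.sum_congr rfl fun i _ => by ring
  have hq3 : (H *ᵥ (H *ᵥ g)) ⬝ᵥ (H *ᵥ g) = ∑ i, d i ^ 2 * lam i ^ 3 := by
    rw [hHHg, hHg, horth, hDd, hDd]
    exact Finset.sum_congr rfl fun i _ => by ring
  -- transported constraint
  have K' : ∀ v : Fin n → ℝ, (∑ i, lam i * v i ^ 2) ≤ c * (∑ i, d i * v i) ^ 2 := by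
    intro v
    have hK := K (Q *ᵥ v)
    have e1 : (Q *ᵥ v) ⬝ᵥ (H *ᵥ (Q *ᵥ v)) = ∑ i, lam i * v i ^ 2 := by
      rw [hspec, ← Matrix.mulVec_mulVec, ← Matrix.mulVec_mulVec, hQmv, horth, hDd]
      exact Finset.sum_congr rfl fun i _ => by ring
    have e2 : g ⬝ᵥ (Q *ᵥ v) = ∑ i, d i * v i := by
      rw [hg, horth]
      rfl
    rwa [e1, e2] at hK
  have core := scalar_core lam d c K'
  -- expand the core sum
  have hexp : (∑ k, d k ^ 2 *
      (lam k ^ 3 - (∑ i, lam i) * lam k ^ 2 + E2 lam Finset.univ * lam k - E3 lam Finset.univ))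
      = (∑ k, d k ^ 2 * lam k ^ 3) - (∑ i, lam i) * (∑ k, d k ^ 2 * lam k ^ 2)
        + E2 lam Finset.univ * (∑ k, d k ^ 2 * lam k) - E3 lam Finset.univ * (∑ k, d k ^ 2) := by
    rw [Finset.sum_congr rfl (fun k (_ : k ∈ Finset.univ) => show d k ^ 2 *
      (lam k ^ 3 - (∑ i, lam i) * lam k ^ 2 + E2 lam Finset.univ * lam k - E3 lam Finset.univ)
      = d k ^ 2 * lam k ^ 3 - (∑ i, lam i) * (d k ^ 2 * lam k ^ 2)
        + E2 lam Finset.univ * (d k ^ 2 * lam k) - E3 lam Finset.univ * (d k ^ 2) from by ring)]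
    rw [Finset.sum_sub_distrib, Finset.sum_add_distrib, Finset.sum_sub_distrib,
      ← Finset.mul_sum, ← Finset.mul_sum, ← Finset.mul_sum]
  rw [hexp] at core
  -- reduce the goal
  have hg1 : ((H.trace • (1 : Matrix (Fin n) (Fin n) ℝ) - H) * (H * H)).trace
      = H.trace * (H * H).trace - (H * (H * H)).trace := by
    rw [Matrix.sub_mul, Matrix.smul_mul, Matrix.one_mul, Matrix.trace_sub, Matrix.trace_smul,
      smul_eq_mul]
  have hg2 : ((H.trace • (1 : Matrix (Fin n) (Fin n) ℝ) - H) *ᵥ (H *ᵥ g)) ⬝ᵥ (H *ᵥ g)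
      = H.trace * ((H *ᵥ g) ⬝ᵥ (H *ᵥ g)) - (H *ᵥ (H *ᵥ g)) ⬝ᵥ (H *ᵥ g) := by
    rw [Matrix.sub_mulVec, Matrix.smul_mulVec, Matrix.one_mulVec, sub_dotProduct,
      smul_dotProduct, smul_eq_mul]
  rw [ge_iff_le, hg1, hg2, hT1, hT2, hT3, hq0, hq1, hq2, hq3]
  unfold S2
  rw [hT1, hT2]
  unfold E2 E3 at core
  nlinarith [core]


end HEstAux

namespace HEstAux

lemma deriv_nonneg_of_monotoneOn {f : ℝ → ℝ} {s : Set ℝ} {a q : ℝ}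
    (hs : s ∈ nhds a) (hm : MonotoneOn f s) (hd : HasDerivAt f q a) : 0 ≤ q := by
  have ht : Filter.Tendsto (slope f a) (nhdsWithin a (Set.Ioi a)) (nhds q) :=
    (hasDerivAt_iff_tendsto_slope.mp hd).mono_left
      (nhdsWithin_mono a (fun y hy => ne_of_gt hy))
  refine ge_of_tendsto ht ?_
  have hsa : a ∈ s := mem_of_mem_nhds hs
  filter_upwards [nhdsWithin_le_nhds hs, self_mem_nhdsWithin] with t hts hta
  have h1 : f a ≤ f t := hm hsa hts (le_of_lt hta)
  have h0 : (0:ℝ) < t - a := by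
    have : a < t := hta
    linarith
  rw [slope_def_field]
  exact div_nonneg (by linarith) h0.le


end HEstAux

open HEstAux in
set_option maxHeartbeats 1000000 in
/-- If `Ω ⊂ ℝ^n` (`n ≥ 3`) is open convex, `u ∈ C²(Ω)`, and there is a
strictly decreasing `C²` function `U` on an open interval `I ⊇ u(Ω)` with `x ↦ U(u(x))`
convex on `Ω`, then for every `x ∈ Ω`, with `H := D²u(x)`, `g := ∇u(x)`, `s := tr H`:
`(1/3)‖g‖²[2 tr((s I − H) H²) − 2 S₂(H) s] ≥ 2⟨(s I − H) H g, H g⟩ − 2 S₂(H)⟨H g, g⟩`. -/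
theorem hessian_estimate_of_decreasing_convexification {n : ℕ} (hn : 3 ≤ n)
    (Ω : Set (EuclideanSpace ℝ (Fin n))) (hΩo : IsOpen Ω) (hΩconv : Convex ℝ Ω)
    (u : EuclideanSpace ℝ (Fin n) → ℝ) (hu : ContDiffOn ℝ 2 u Ω)
    (I : Set ℝ) (hIo : IsOpen I) (hIint : I.OrdConnected) (hIsub : u '' Ω ⊆ I)
    (U : ℝ → ℝ) (hU : ContDiffOn ℝ 2 U I) (hUmono : StrictAntiOn U I)
    (hconv : ConvexOn ℝ Ω (fun x => U (u x))) :
    ∀ x ∈ Ω,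
      (1 / 3) * (gradVec u x ⬝ᵥ gradVec u x) *
          (2 * (((hessianMatrix u x).trace • (1 : Matrix (Fin n) (Fin n) ℝ)
                  - hessianMatrix u x) * (hessianMatrix u x * hessianMatrix u x)).trace
            - 2 * S2 (hessianMatrix u x) * (hessianMatrix u x).trace)
        ≥ 2 * ((((hessianMatrix u x).trace • (1 : Matrix (Fin n) (Fin n) ℝ)
                  - hessianMatrix u x) *ᵥ (hessianMatrix u x *ᵥ gradVec u x)) ⬝ᵥ
                (hessianMatrix u x *ᵥ gradVec u x))
            - 2 * S2 (hessianMatrix u x) *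
                ((hessianMatrix u x *ᵥ gradVec u x) ⬝ᵥ gradVec u x) := by
  intro x hx
  classical
  have hxnh : Ω ∈ nhds x := hΩo.mem_nhds hx
  have hux : u x ∈ I := hIsub ⟨x, hx, rfl⟩
  have hInh : I ∈ nhds (u x) := hIo.mem_nhds hux
  have hu2 : ContDiffAt ℝ 2 u x := hu.contDiffAt hxnh
  have hU2 : ContDiffAt ℝ 2 U (u x) := hU.contDiffAt hInh
  set κ : ℝ := deriv U (u x) with hκdef
  set κ2 : ℝ := deriv (deriv U) (u x) with hκ2def
  set f'' := fderiv ℝ (fderiv ℝ u) x with hf''def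
  have hsym : ∀ v w : EuclideanSpace ℝ (Fin n), f'' v w = f'' w v :=
    hu2.isSymmSndFDerivAt minSmoothness_of_isRCLikeNormedField.le
  -- second derivative of U
  have hderivU : ContDiffOn ℝ 1 (deriv U) I := hU.deriv_of_isOpen hIo (by norm_num)
  have hU'diff : DifferentiableAt ℝ (deriv U) (u x) :=
    (hderivU.contDiffAt hInh).differentiableAt one_ne_zero
  have hUdiffx : DifferentiableAt ℝ U (u x) := hU2.differentiableAt two_ne_zero
  -- line setup, as a reusable construction
  -- key inequality along each direction
  have key : ∀ v : EuclideanSpace ℝ (Fin n),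
      0 ≤ κ2 * (fderiv ℝ u x v) ^ 2 + κ * (f'' v v) := by
    intro v
    set L : ℝ → EuclideanSpace ℝ (Fin n) := fun t => x + t • v with hLdef
    have hL0 : L 0 = x := by simp [hLdef]
    have hLd : ∀ t : ℝ, HasDerivAt L v t := by
      intro t
      have := ((hasDerivAt_id t).smul_const v).const_add x
      simp only [one_smul] at this
      exact this
    set s : Set ℝ := L ⁻¹' Ω with hsdef
    have hsopen : IsOpen s := hΩo.preimage (by fun_prop)
    have hs0 : (0:ℝ) ∈ s := by
      simp only [hsdef, Set.mem_preimage, hL0]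
      exact hx
    have hsnh : s ∈ nhds (0:ℝ) := hsopen.mem_nhds hs0
    -- convexity of the composition along the line
    have hψconv : ConvexOn ℝ s (fun t => U (u (L t))) := by
      have hA := hconv.comp_affineMap (AffineMap.lineMap x (x + v) : ℝ →ᵃ[ℝ] _)
      have hcoe : ⇑(AffineMap.lineMap x (x + v) : ℝ →ᵃ[ℝ] EuclideanSpace ℝ (Fin n)) = L := by
        funext t
        simp [AffineMap.lineMap_apply, hLdef]
        module
      rw [hcoe] at hA
      exact hA
    -- derivative data along the line
    have hmem : ∀ t ∈ s, L t ∈ Ω := fun t ht => ht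
    have hw : ∀ t ∈ s, HasDerivAt (fun τ => u (L τ)) (fderiv ℝ u (L t) v) t := by
      intro t ht
      have hut : ContDiffAt ℝ 2 u (L t) := hu.contDiffAt (hΩo.mem_nhds (hmem t ht))
      exact ((hut.differentiableAt two_ne_zero).hasFDerivAt.comp_hasDerivAt t (hLd t))
    have hψ : ∀ t ∈ s, HasDerivAt (fun τ => U (u (L τ)))
        (deriv U (u (L t)) * fderiv ℝ u (L t) v) t := by
      intro t ht
      have hUt : u (L t) ∈ I := hIsub ⟨L t, hmem t ht, rfl⟩
      have hUd : DifferentiableAt ℝ U (u (L t)) :=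
        (hU.contDiffAt (hIo.mem_nhds hUt)).differentiableAt two_ne_zero
      exact hUd.hasDerivAt.comp t (hw t ht)
    set W : ℝ → ℝ := fun t => deriv U (u (L t)) * fderiv ℝ u (L t) v with hWdef
    -- derivative of W at 0
    have h1 : HasDerivAt (fun t => deriv U (u (L t))) (κ2 * fderiv ℝ u x v) 0 := by
      have houter : HasDerivAt (deriv U) κ2 (u (L 0)) := by
        rw [hL0]; exact hU'diff.hasDerivAt
      have hcomp := houter.comp (0:ℝ) (hw 0 hs0)
      rw [hL0] at hcomp
      exact hcomp
    have h2 : HasDerivAt (fun t => fderiv ℝ u (L t) v) (f'' v v) 0 := by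
      have hfd : DifferentiableAt ℝ (fderiv ℝ u) x :=
        (hu2.fderiv_right le_rfl).differentiableAt one_ne_zero
      have happ : HasFDerivAt (fun y => fderiv ℝ u y v)
          ((ContinuousLinearMap.apply ℝ ℝ v).comp f'') x :=
        (ContinuousLinearMap.apply ℝ ℝ v).hasFDerivAt.comp x hfd.hasFDerivAt
      have happ' : HasFDerivAt (fun y => fderiv ℝ u y v)
          ((ContinuousLinearMap.apply ℝ ℝ v).comp f'') (L 0) := by
        rw [hL0]; exact happ
      have hcomp := happ'.comp_hasDerivAt (0:ℝ) (hLd 0)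
      exact hcomp
    have hW0 : HasDerivAt W (κ2 * fderiv ℝ u x v * fderiv ℝ u (L 0) v
        + deriv U (u (L 0)) * (f'' v v)) 0 := h1.mul h2
    rw [hL0] at hW0
    -- W agrees with deriv ψ near 0
    have hWeq : ∀ t ∈ s, deriv (fun τ => U (u (L τ))) t = W t := fun t ht => (hψ t ht).deriv
    have hW0' : HasDerivAt (deriv (fun τ => U (u (L τ))))
        (κ2 * fderiv ℝ u x v * fderiv ℝ u x v + κ * (f'' v v)) 0 := by
      apply hW0.congr_of_eventuallyEq
      filter_upwards [hsnh] with t ht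
      exact hWeq t ht
    have hmono : MonotoneOn (deriv (fun τ => U (u (L τ)))) s :=
      hψconv.monotoneOn_deriv (fun t ht => (hψ t ht).differentiableAt)
    have := deriv_nonneg_of_monotoneOn hsnh hmono hW0'
    nlinarith [this]
  -- κ ≤ 0
  have hκle : κ ≤ 0 := by
    have hanti : AntitoneOn U I := hUmono.antitoneOn
    have hmono' : MonotoneOn (fun y => -U y) I :=
      fun a ha b hb hab => neg_le_neg (hanti ha hb hab)
    have := deriv_nonneg_of_monotoneOn hInh hmono' hUdiffx.hasDerivAt.neg
    linarith
  -- coordinate bridges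
  set ve : (Fin n → ℝ) → EuclideanSpace ℝ (Fin n) :=
    fun v => (WithLp.equiv 2 (Fin n → ℝ)).symm v with hvedef
  have hbasis : ∀ w : EuclideanSpace ℝ (Fin n),
      w = ∑ i, w i • EuclideanSpace.single i (1:ℝ) := by
    intro w
    have hb := (EuclideanSpace.basisFun (Fin n) ℝ).sum_repr w
    simp only [EuclideanSpace.basisFun_apply, EuclideanSpace.basisFun_repr] at hb
    exact hb.symm
  have hHdef : ∀ i j, hessianMatrix u x i j
      = f'' (EuclideanSpace.single i 1) (EuclideanSpace.single j 1) := by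
    intro i j
    unfold hessianMatrix
    rw [iteratedFDeriv_two_apply]
    simp
    rfl
  have hstep : ∀ (w : EuclideanSpace ℝ (Fin n) →L[ℝ] ℝ) (v : Fin n → ℝ),
      w (ve v) = ∑ j, v j * w (EuclideanSpace.single j 1) := by
    intro w v
    conv_lhs => rw [hbasis (ve v)]
    rw [map_sum]
    apply Finset.sum_congr rfl
    intro j _
    rw [ContinuousLinearMap.map_smul]
    simp [hvedef, smul_eq_mul]
  have hQF : ∀ v : Fin n → ℝ,
      v ⬝ᵥ (hessianMatrix u x *ᵥ v) = f'' (ve v) (ve v) := by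
    intro v
    have e1 : f'' (ve v) (ve v) = ∑ j, v j * f'' (ve v) (EuclideanSpace.single j 1) :=
      hstep (f'' (ve v)) v
    have e2 : ∀ j, f'' (ve v) (EuclideanSpace.single j 1)
        = ∑ i, v i * f'' (EuclideanSpace.single i 1) (EuclideanSpace.single j 1) := by
      intro j
      have := hstep (f''.flip (EuclideanSpace.single j 1)) v
      simpa [ContinuousLinearMap.flip_apply] using this
    calc v ⬝ᵥ (hessianMatrix u x *ᵥ v)
        = ∑ i, ∑ j, v i * (hessianMatrix u x i j * v j) := by
          simp [dotProduct, Matrix.mulVec, Finset.mul_sum]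
      _ = ∑ j, ∑ i, v i * (hessianMatrix u x i j * v j) := Finset.sum_comm
      _ = ∑ j, v j * ∑ i, v i * f'' (EuclideanSpace.single i 1) (EuclideanSpace.single j 1) := by
          apply Finset.sum_congr rfl
          intro j _
          rw [Finset.mul_sum]
          apply Finset.sum_congr rfl
          intro i _
          rw [hHdef i j]
          ring
      _ = f'' (ve v) (ve v) := by
          rw [e1]
          exact Finset.sum_congr rfl (fun j _ => by rw [e2 j])
  have hGrad : ∀ v : Fin n → ℝ, gradVec u x ⬝ᵥ v = fderiv ℝ u x (ve v) := by
    intro v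
    have htd : fderiv ℝ u x (ve v) = inner (𝕜 := ℝ) (gradient u x) (ve v) := by
      rw [gradient]
      rw [← InnerProductSpace.toDual_apply_apply]
      rw [LinearIsometryEquiv.apply_symm_apply]
    rw [htd]
    rw [PiLp.inner_apply]
    unfold dotProduct gradVec
    apply Finset.sum_congr rfl
    intro i _
    simp [hvedef, RCLike.inner_apply]
    ring
  -- case split on κ
  by_cases hκ0 : κ = 0
  · -- gradient vanishes
    have gmax : ∀ y ∈ Ω, u y ≤ u x := by
      intro y hy
      set v : EuclideanSpace ℝ (Fin n) := y - x with hvdef2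
      set L : ℝ → EuclideanSpace ℝ (Fin n) := fun t => x + t • v with hLdef
      have hL0 : L 0 = x := by simp [hLdef]
      have hL1 : L 1 = y := by simp [hLdef, hvdef2]
      have hLd : ∀ t : ℝ, HasDerivAt L v t := by
        intro t
        have := ((hasDerivAt_id t).smul_const v).const_add x
        simp only [one_smul] at this
        exact this
      set s : Set ℝ := L ⁻¹' Ω with hsdef
      have hsopen : IsOpen s := hΩo.preimage (by fun_prop)
      have hs0 : (0:ℝ) ∈ s := by
        simp only [hsdef, Set.mem_preimage, hL0]
        exact hx
      have hs1 : (1:ℝ) ∈ s := by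
        simp only [hsdef, Set.mem_preimage, hL1]
        exact hy
      have hψconv : ConvexOn ℝ s (fun t => U (u (L t))) := by
        have hA := hconv.comp_affineMap (AffineMap.lineMap x (x + v) : ℝ →ᵃ[ℝ] _)
        have hcoe : ⇑(AffineMap.lineMap x (x + v) : ℝ →ᵃ[ℝ] EuclideanSpace ℝ (Fin n)) = L := by
          funext t
          simp [AffineMap.lineMap_apply, hLdef]
          module
        rw [hcoe] at hA
        exact hA
      have hw0 : HasDerivAt (fun τ => u (L τ)) (fderiv ℝ u x v) 0 := by
        have hdiff : HasFDerivAt u (fderiv ℝ u x) (L 0) := by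
          rw [hL0]; exact (hu2.differentiableAt two_ne_zero).hasFDerivAt
        exact hdiff.comp_hasDerivAt 0 (hLd 0)
      have hψ0 : HasDerivAt (fun τ => U (u (L τ))) (κ * fderiv ℝ u x v) 0 := by
        have hUdOuter : HasDerivAt U κ (u (L 0)) := by
          rw [hL0]; exact hUdiffx.hasDerivAt
        exact hUdOuter.comp 0 hw0
      have hd0 : deriv (fun τ => U (u (L τ))) 0 = 0 := by
        rw [hψ0.deriv, hκ0]
        ring
      have hslope := hψconv.deriv_le_slope hs0 hs1 zero_lt_one hψ0.differentiableAt
      rw [hd0, slope_def_field] at hslope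
      rw [show (1:ℝ) - 0 = 1 by norm_num, div_one] at hslope
      have hUy : U (u x) ≤ U (u y) := by
        have h3 : U (u (L 0)) ≤ U (u (L 1)) := by linarith
        rwa [hL0, hL1] at h3
      by_contra hcon
      push_neg at hcon
      have := hUmono hux (hIsub ⟨y, hy, rfl⟩) hcon
      linarith
    have hmax : IsLocalMax u x := by
      filter_upwards [hxnh] with y hy using gmax y hy
    have hfz : fderiv ℝ u x = 0 := hmax.fderiv_eq_zero
    have hgrad0 : gradient u x = 0 := by
      rw [gradient, hfz, map_zero]
    have hgz : gradVec u x = 0 := by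
      funext i
      unfold gradVec
      rw [hgrad0]
      simp
    rw [hgz]
    simp only [Matrix.mulVec_zero, dotProduct_zero, zero_dotProduct,
      mul_zero, zero_mul, sub_zero]
    norm_num
  · -- main case
    have hκneg : κ < 0 := lt_of_le_of_ne hκle hκ0
    set c : ℝ := κ2 / (-κ) with hcdef
    have K : ∀ v : Fin n → ℝ,
        v ⬝ᵥ (hessianMatrix u x *ᵥ v) ≤ c * (gradVec u x ⬝ᵥ v) ^ 2 := by
      intro v
      have hk := key (ve v)
      rw [hQF v, hGrad v]
      set a := fderiv ℝ u x (ve v)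
      set b := f'' (ve v) (ve v)
      have hκpos : 0 < -κ := by linarith
      rw [hcdef, div_mul_eq_mul_div]
      rw [le_div_iff₀ hκpos]
      nlinarith [hk]
    have hHerm : (hessianMatrix u x).IsHermitian := by
      show (hessianMatrix u x).conjTranspose = hessianMatrix u x
      ext i j
      rw [Matrix.conjTranspose_apply]
      rw [hHdef j i, hHdef i j, hsym]
      rfl
    exact matrix_core (hessianMatrix u x) hHerm (gradVec u x) c K
end
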